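/- Let X be a finite set with a weight μ : X → [0,∞), let Y be a finite set with a lattice norm N on ℝ^Y, and let K : X × Y^d → [0,∞) be a kernel with associated positive multilinear operator T. Let 1 ≤ q < ∞ and A > 0. If for every nonnegative f ∈ ℝ^Y one has ‖T(f,…,f)^{1/d}‖_{L^q(μ)} ≤ A·N(f), then for all nonnegative f_1, …, f_d ∈ ℝ^Y one has ‖T(f_1,…,f_d)^{1/d}‖_{L^q(μ)} ≤ d·A·(N(f_1)⋯N(f_d))^{1/d}. -/

import Mathlib

/- STATEMENT 13: The diagonal norm bound implies the off-diagonal norm bound with an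
   extra factor of d (footnote in Section 1.2 of the paper). -/

theorem diagonal_implies_offdiagonal
    (d : ℕ) (hd : 1 ≤ d)
    (X : Type*) [Fintype X] (μ : X → ℝ) (hμ : ∀ x, 0 ≤ μ x)
    (Y : Type*) [Fintype Y]
    -- lattice norm on ℝ^Y
    (N : (Y → ℝ) → ℝ)
    (hN_nonneg : ∀ f, 0 ≤ N f)
    (hN_add : ∀ f g, N (f + g) ≤ N f + N g)
    (hN_smul : ∀ (c : ℝ) f, N (c • f) = |c| * N f)
    (hN_defin : ∀ f, N f = 0 → f = 0)
    (hN_lattice : ∀ f g, (∀ y, |f y| ≤ |g y|) → N f ≤ N g)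
    -- nonnegative kernel
    (K : X → (Fin d → Y) → ℝ) (hK : ∀ x y, 0 ≤ K x y)
    (q : ℝ) (hq : 1 ≤ q)
    (A : ℝ) (hA : 0 < A)
    -- diagonal hypothesis: ‖T(f,…,f)^{1/d}‖_{L^q(μ)} ≤ A N(f)
    (hdiag : ∀ f : Y → ℝ, (∀ y, 0 ≤ f y) →
      (∑ x, μ x * (∑ y : Fin d → Y, K x y * ∏ j, f (y j)) ^ (q / d)) ^ (1 / q)
        ≤ A * N f) :
    -- off-diagonal conclusion with constant d·A
    ∀ f : Fin d → Y → ℝ, (∀ j y, 0 ≤ f j y) →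
      (∑ x, μ x * (∑ y : Fin d → Y, K x y * ∏ j, f j (y j)) ^ (q / d)) ^ (1 / q)
        ≤ d * A * (∏ j, N (f j)) ^ (1 / (d : ℝ)) := by
  intro f hf
  have hdn : d ≠ 0 := by omega
  have hd' : (0:ℝ) < d := by exact_mod_cast Nat.pos_of_ne_zero hdn
  have hq0 : (0:ℝ) < q := lt_of_lt_of_le one_pos hq
  have hqd : (0:ℝ) < q / d := div_pos hq0 hd'
  by_cases hzero : ∃ j, N (f j) = 0
  · -- degenerate case: some f j is zero, both sides vanish
    obtain ⟨j, hj⟩ := hzero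
    have hfj : f j = 0 := hN_defin _ hj
    have hS : ∀ x : X, (∑ y : Fin d → Y, K x y * ∏ k, f k (y k)) = 0 := by
      intro x
      apply Finset.sum_eq_zero
      intro y _
      have : ∏ k, f k (y k) = 0 :=
        Finset.prod_eq_zero (Finset.mem_univ j) (by simp [hfj])
      simp [this]
    have h1 : (0:ℝ) ≤ (∏ k, N (f k)) ^ (1 / (d:ℝ)) :=
      Real.rpow_nonneg (Finset.prod_nonneg fun k _ => hN_nonneg _) _
    have h2 : (0:ℝ) ≤ (d:ℝ) * A * (∏ k, N (f k)) ^ (1 / (d:ℝ)) :=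
      mul_nonneg (mul_nonneg hd'.le hA.le) h1
    simp only [hS, Real.zero_rpow hqd.ne', mul_zero, Finset.sum_const_zero,
      Real.zero_rpow (one_div_ne_zero hq0.ne')]
    exact h2
  · push_neg at hzero
    have hpos : ∀ k, 0 < N (f k) := fun k => (hN_nonneg _).lt_of_ne (Ne.symm (hzero k))
    set P : ℝ := ∏ k, N (f k) with hPdef
    have hP : 0 < P := Finset.prod_pos fun k _ => hpos k
    set C : ℝ := P ^ (1 / (d:ℝ)) with hCdef
    have hC : 0 < C := Real.rpow_pos_of_pos hP _
    have hCd : C ^ (d:ℕ) = P := by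
      rw [← Real.rpow_natCast C d, hCdef, ← Real.rpow_mul hP.le]
      rw [one_div_mul_cancel hd'.ne', Real.rpow_one]
    set g : Fin d → Y → ℝ := fun k => (C / N (f k)) • f k with hgdef
    have hg_nonneg : ∀ k y, 0 ≤ g k y := fun k y =>
      mul_nonneg (div_nonneg hC.le (hN_nonneg _)) (hf k y)
    have hNg : ∀ k, N (g k) = C := by
      intro k
      rw [hgdef]
      rw [hN_smul, abs_of_nonneg (div_nonneg hC.le (hN_nonneg _)),
        div_mul_cancel₀ _ (hpos k).ne']
    -- the products agree
    have hprod : ∀ y : Fin d → Y, (∏ k, f k (y k)) = ∏ k, g k (y k) := by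
      intro y
      have : (∏ k, g k (y k)) = (∏ k : Fin d, (C / N (f k))) * ∏ k, f k (y k) := by
        simp only [hgdef, Pi.smul_apply, smul_eq_mul, Finset.prod_mul_distrib]
      rw [this, Finset.prod_div_distrib, Finset.prod_const, Finset.card_univ,
        Fintype.card_fin, hCd, ← hPdef, div_self hP.ne', one_mul]
    set F : Y → ℝ := ∑ k, g k with hFdef
    have hF_apply : ∀ y, F y = ∑ k, g k y := by
      intro y; rw [hFdef]; simp
    have hF_nonneg : ∀ y, 0 ≤ F y := fun y => by
      rw [hF_apply]; exact Finset.sum_nonneg fun k _ => hg_nonneg k y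
    have hgF : ∀ k y, g k y ≤ F y := by
      intro k y
      rw [hF_apply]
      exact Finset.single_le_sum (fun i _ => hg_nonneg i y) (Finset.mem_univ k)
    -- pointwise comparison of the inner sums
    have hSle : ∀ x : X,
        (∑ y : Fin d → Y, K x y * ∏ k, f k (y k))
          ≤ ∑ y : Fin d → Y, K x y * ∏ k, F (y k) := by
      intro x
      apply Finset.sum_le_sum
      intro y _
      apply mul_le_mul_of_nonneg_left _ (hK x y)
      rw [hprod y]
      exact Finset.prod_le_prod (fun k _ => hg_nonneg k (y k)) fun k _ => hgF k (y k)
    have hS_nonneg : ∀ x : X, 0 ≤ ∑ y : Fin d → Y, K x y * ∏ k, f k (y k) := by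
      intro x
      exact Finset.sum_nonneg fun y _ =>
        mul_nonneg (hK x y) (Finset.prod_nonneg fun k _ => hf k (y k))
    have step1 :
        (∑ x, μ x * (∑ y : Fin d → Y, K x y * ∏ k, f k (y k)) ^ (q / d)) ^ (1 / q)
          ≤ (∑ x, μ x * (∑ y : Fin d → Y, K x y * ∏ k, F (y k)) ^ (q / d)) ^ (1 / q) := by
      apply Real.rpow_le_rpow
      · exact Finset.sum_nonneg fun x _ =>
          mul_nonneg (hμ x) (Real.rpow_nonneg (hS_nonneg x) _)
      · apply Finset.sum_le_sum
        intro x _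
        exact mul_le_mul_of_nonneg_left
          (Real.rpow_le_rpow (hS_nonneg x) (hSle x) hqd.le) (hμ x)
      · positivity
    have step2 := hdiag F hF_nonneg
    -- subadditivity of N over sums
    have hN0 : N 0 = 0 := by
      have := hN_smul 0 0
      simpa using this
    have hNsub : ∀ s : Finset (Fin d), N (∑ k ∈ s, g k) ≤ ∑ k ∈ s, N (g k) := by
      intro s
      induction s using Finset.cons_induction with
      | empty => simp [hN0]
      | cons a s ha ih =>
        rw [Finset.sum_cons, Finset.sum_cons]
        exact le_trans (hN_add _ _) (add_le_add_right ih _)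
    have hNF : N F ≤ (d:ℝ) * C := by
      calc N F ≤ ∑ k, N (g k) := hNsub Finset.univ
        _ = (d:ℝ) * C := by simp [hNg, mul_comm]
    calc (∑ x, μ x * (∑ y : Fin d → Y, K x y * ∏ k, f k (y k)) ^ (q / d)) ^ (1 / q)
        ≤ (∑ x, μ x * (∑ y : Fin d → Y, K x y * ∏ k, F (y k)) ^ (q / d)) ^ (1 / q) := step1
      _ ≤ A * N F := step2
      _ ≤ A * ((d:ℝ) * C) := mul_le_mul_of_nonneg_left hNF hA.le
      _ = (d:ℝ) * A * P ^ (1 / (d:ℝ)) := by rw [hCdef]; ring
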